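/- If Z = βI − Σ_{k=1}^{s} λ_k g_k g_k† with β > 0, λ_k ≥ 0, and g_k ∈ ℂ^r, and W is positive semidefinite with W Z = 0, then rank(W) ≤ min(s, r). -/

import Mathlib

open Matrix ComplexOrder

private lemma myrank_add_le {m n : Type*} [Fintype n] [DecidableEq n]
    (A B : Matrix m n ℂ) : (A + B).rank ≤ A.rank + B.rank := by
  classical
  have hr : LinearMap.range (A + B).mulVecLin ≤
      LinearMap.range A.mulVecLin ⊔ LinearMap.range B.mulVecLin := by
    rintro x ⟨y, rfl⟩
    rw [mulVecLin_add]
    exact Submodule.add_mem_sup ⟨y, rfl⟩ ⟨y, rfl⟩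
  calc (A + B).rank ≤ Module.finrank ℂ
        ↥(LinearMap.range A.mulVecLin ⊔ LinearMap.range B.mulVecLin) :=
        Submodule.finrank_mono hr
    _ ≤ A.rank + B.rank := Submodule.finrank_add_le_finrank_add_finrank _ _

private lemma myrank_smul_le {m n : Type*} [Fintype n] (c : ℂ)
    (A : Matrix m n ℂ) : (c • A).rank ≤ A.rank := by
  apply Submodule.finrank_mono
  rintro x ⟨y, rfl⟩
  exact ⟨c • y, by simp [mulVecLin, mulVec_smul, smul_mulVec]⟩

private lemma myrank_sum_le {ι m n : Type*} [Fintype n] [DecidableEq n]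
    (t : Finset ι) (f : ι → Matrix m n ℂ) :
    (∑ i ∈ t, f i).rank ≤ ∑ i ∈ t, (f i).rank := by
  classical
  induction t using Finset.cons_induction with
  | empty => simp
  | cons a t ha ih =>
      rw [Finset.sum_cons, Finset.sum_cons]
      exact (myrank_add_le _ _).trans (add_le_add_right ih _)

private lemma myrank_vecMulVec_le {m n : Type*} [Fintype m] [Fintype n] [DecidableEq n]
    [DecidableEq m] (w : m → ℂ) (v : n → ℂ) : (vecMulVec w v).rank ≤ 1 := by
  rw [vecMulVec_eq (Fin 1)]
  refine (Matrix.rank_mul_le_left _ _).trans ?_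
  exact (Matrix.rank_le_card_width _).trans (by simp)

/-- If `Z = β I − Σ_k λ_k g_k g_k†` with `β > 0`, `λ_k ≥ 0`, and `W` is positive semidefinite
with `W Z = 0`, then `rank W ≤ min s r`. -/
theorem stmt8 {r s : ℕ} (β : ℝ) (hβ : 0 < β) (lam : Fin s → ℝ) (hlam : ∀ k, 0 ≤ lam k)
    (g : Fin s → (Fin r → ℂ)) (W : Matrix (Fin r) (Fin r) ℂ) (hW : W.PosSemidef)
    (hWZ : W * ((β : ℂ) • (1 : Matrix (Fin r) (Fin r) ℂ) -
        ∑ k, (lam k : ℂ) • vecMulVec (g k) (star (g k))) = 0) :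
    W.rank ≤ min s r := by
  have hβ' : (β : ℂ) ≠ 0 := by exact_mod_cast hβ.ne'
  have key : (β : ℂ) • W = ∑ k, (lam k : ℂ) • (W * vecMulVec (g k) (star (g k))) := by
    rw [Matrix.mul_sub, sub_eq_zero] at hWZ
    calc (β : ℂ) • W = W * ((β : ℂ) • 1) := by
          rw [Matrix.mul_smul, Matrix.mul_one]
      _ = W * ∑ k, (lam k : ℂ) • vecMulVec (g k) (star (g k)) := hWZ
      _ = ∑ k, (lam k : ℂ) • (W * vecMulVec (g k) (star (g k))) := by
          rw [Matrix.mul_sum]; simp [Matrix.mul_smul]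
  have h1 : W.rank ≤ s := by
    have hWeq : W = (β : ℂ)⁻¹ • ((β : ℂ) • W) := by
      rw [smul_smul, inv_mul_cancel₀ hβ', one_smul]
    calc W.rank = ((β : ℂ)⁻¹ • ((β : ℂ) • W)).rank := by rw [← hWeq]
      _ ≤ ((β : ℂ) • W).rank := myrank_smul_le _ _
      _ = (∑ k, (lam k : ℂ) • (W * vecMulVec (g k) (star (g k)))).rank := by rw [key]
      _ ≤ ∑ k : Fin s, ((lam k : ℂ) • (W * vecMulVec (g k) (star (g k)))).rank :=
          myrank_sum_le _ _
      _ ≤ ∑ _k : Fin s, 1 := by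
          refine Finset.sum_le_sum fun k _ => ?_
          exact (myrank_smul_le _ _).trans
            ((Matrix.rank_mul_le_right _ _).trans (myrank_vecMulVec_le _ _))
      _ = s := by simp
  exact le_min h1 (W.rank_le_card_width.trans (Fintype.card_fin r).le)
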